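/- For fixed t ∈ ℝ and x ∈ ℝ, as a → 1/2 from above, the Kuznetsov-Ma breather B_KM(t,x; a) converges pointwise to the Peregrine breather B_P(t,x) = e^{it}(1 - 4(1+2it)/(1+4t²+2x²)). -/

import Mathlib

open Complex Filter Topology

/-- Partial derivative in the first (time) variable. -/
noncomputable def pdt (u : ℝ → ℝ → ℂ) (t x : ℝ) : ℂ := deriv (fun s => u s x) t

/-- Partial derivative in the second (space) variable. -/
noncomputable def pdx (u : ℝ → ℝ → ℂ) (t x : ℝ) : ℂ := deriv (fun y => u t y) x

/-- `u` solves the cubic focusing NLS `i u_t + u_xx + |u|² u = 0`. -/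
def IsNLSSolution (u : ℝ → ℝ → ℂ) : Prop :=
  ∀ t x : ℝ, Complex.I * pdt u t x + pdx (pdx u) t x
    + (((‖u t x‖ : ℝ) : ℂ))^2 * u t x = 0

/-- The Peregrine breather. -/
noncomputable def BP (t x : ℝ) : ℂ :=
  Complex.exp (Complex.I * t) *
    (1 - 4 * (1 + 2 * Complex.I * t) / (1 + 4 * (t:ℂ)^2 + 2 * (x:ℂ)^2))

/-- Parameter `α` of the Kuznetsov-Ma breather. -/
noncomputable def KMalpha (a : ℝ) : ℝ := Real.sqrt (8 * a * (2 * a - 1))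

/-- Parameter `β` of the Kuznetsov-Ma breather. -/
noncomputable def KMbeta (a : ℝ) : ℝ := Real.sqrt (2 * (2 * a - 1))

/-- The Kuznetsov-Ma breather with parameter `a > 1/2`. -/
noncomputable def BKM (a : ℝ) (t x : ℝ) : ℂ :=
  Complex.exp (Complex.I * t) *
    (1 - Real.sqrt 2 * (KMbeta a) *
      (((KMbeta a : ℂ))^2 * Real.cos (KMalpha a * t)
        + Complex.I * (KMalpha a) * Real.sin (KMalpha a * t)) /
      ((KMalpha a : ℂ) * Real.cosh (KMbeta a * x)
        - (Real.sqrt 2 : ℂ) * (KMbeta a) * Real.cos (KMalpha a * t)))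

lemma tendsto_sin_mul_div (c : ℝ) :
    Tendsto (fun s : ℝ => Real.sin (s * c) / s) (nhdsWithin 0 {0}ᶜ) (nhds c) := by
  have h : HasDerivAt (fun s : ℝ => Real.sin (s * c)) (Real.cos (0 * c) * c) 0 :=
    (hasDerivAt_mul_const c).sin
  rw [hasDerivAt_iff_tendsto_slope] at h
  simpa [slope_fun_def, div_eq_inv_mul] using h

lemma tendsto_sinh_mul_div (c : ℝ) :
    Tendsto (fun s : ℝ => Real.sinh (s * c) / s) (nhdsWithin 0 {0}ᶜ) (nhds c) := by
  have h : HasDerivAt (fun s : ℝ => Real.sinh (s * c)) (Real.cosh (0 * c) * c) 0 :=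
    (hasDerivAt_mul_const c).sinh
  rw [hasDerivAt_iff_tendsto_slope] at h
  simpa [slope_fun_def, div_eq_inv_mul] using h

lemma tendsto_one_sub_cos (c : ℝ) :
    Tendsto (fun s : ℝ => (1 - Real.cos (s * c)) / s ^ 2) (nhdsWithin 0 {0}ᶜ)
      (nhds (c ^ 2 / 2)) := by
  have key : ∀ s : ℝ, (1 - Real.cos (s * c)) / s ^ 2 = 2 * (Real.sin (s * (c / 2)) / s) ^ 2 := by
    intro s
    have hc : Real.cos (s * c) = 1 - 2 * Real.sin (s * (c/2)) ^ 2 := by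
      have h2 : Real.cos (2 * (s * (c/2))) = 1 - 2 * Real.sin (s * (c/2)) ^ 2 := by
        rw [Real.cos_two_mul']
        nlinarith [Real.sin_sq_add_cos_sq (s * (c/2))]
      rw [show s * c = 2 * (s * (c/2)) by ring, h2]
    rw [hc]
    rcases eq_or_ne s 0 with h | h
    · simp [h]
    · field_simp; ring
  rw [funext key]
  have := ((tendsto_sin_mul_div (c/2)).pow 2).const_mul 2
  convert this using 2
  ring

lemma tendsto_cosh_sub_one (c : ℝ) :
    Tendsto (fun s : ℝ => (Real.cosh (s * c) - 1) / s ^ 2) (nhdsWithin 0 {0}ᶜ)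
      (nhds (c ^ 2 / 2)) := by
  have key : ∀ s : ℝ, (Real.cosh (s * c) - 1) / s ^ 2 = 2 * (Real.sinh (s * (c / 2)) / s) ^ 2 := by
    intro s
    have hc : Real.cosh (s * c) = 1 + 2 * Real.sinh (s * (c/2)) ^ 2 := by
      have h2 : Real.cosh (2 * (s * (c/2))) = 1 + 2 * Real.sinh (s * (c/2)) ^ 2 := by
        rw [Real.cosh_two_mul, Real.cosh_sq]
        ring
      rw [show s * c = 2 * (s * (c/2)) by ring, h2]
    rw [hc]
    rcases eq_or_ne s 0 with h | h
    · simp [h]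
    · field_simp; ring
  rw [funext key]
  have := ((tendsto_sinh_mul_div (c/2)).pow 2).const_mul 2
  convert this using 2
  ring

lemma tendsto_KMalpha : Tendsto KMalpha (nhdsWithin (1/2:ℝ) (Set.Ioi (1/2)))
    (nhdsWithin 0 {0}ᶜ) := by
  rw [tendsto_nhdsWithin_iff]
  refine ⟨?_, ?_⟩
  · have hc : Continuous KMalpha := Real.continuous_sqrt.comp (by continuity)
    have h0 : KMalpha (1/2) = 0 := by simp [KMalpha]
    have := hc.tendsto (1/2)
    rw [h0] at this
    exact this.mono_left nhdsWithin_le_nhds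
  · filter_upwards [self_mem_nhdsWithin] with a ha
    have h : (0:ℝ) < 8 * a * (2 * a - 1) := by
      have : (1/2:ℝ) < a := ha
      nlinarith
    exact (Real.sqrt_pos.mpr h).ne'

lemma tendsto_KMbeta : Tendsto KMbeta (nhdsWithin (1/2:ℝ) (Set.Ioi (1/2)))
    (nhdsWithin 0 {0}ᶜ) := by
  rw [tendsto_nhdsWithin_iff]
  refine ⟨?_, ?_⟩
  · have hc : Continuous KMbeta := Real.continuous_sqrt.comp (by continuity)
    have h0 : KMbeta (1/2) = 0 := by simp [KMbeta]
    have := hc.tendsto (1/2)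
    rw [h0] at this
    exact this.mono_left nhdsWithin_le_nhds
  · filter_upwards [self_mem_nhdsWithin] with a ha
    have h : (0:ℝ) < 2 * (2 * a - 1) := by
      have : (1/2:ℝ) < a := ha
      nlinarith
    exact (Real.sqrt_pos.mpr h).ne'

noncomputable def auxNR (t a : ℝ) : ℝ := 4 * Real.cos (KMalpha a * t)

noncomputable def auxNI (t a : ℝ) : ℝ := 16 * a * (Real.sin (KMalpha a * t) / KMalpha a)

noncomputable def auxG (t x a : ℝ) : ℝ :=
  2 * (2 * Real.sqrt (2*a) * ((Real.cosh (KMbeta a * x) - 1) / (KMbeta a)^2)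
    + (Real.sqrt (2*a) - 1) / (2*a - 1)
    + 8 * a * ((1 - Real.cos (KMalpha a * t)) / (KMalpha a)^2))

theorem KM_to_peregrine_limit (t x : ℝ) :
    Filter.Tendsto (fun a : ℝ => BKM a t x)
      (nhdsWithin (1/2) (Set.Ioi (1/2))) (nhds (BP t x)) := by
  set l := nhdsWithin (1/2:ℝ) (Set.Ioi (1/2)) with hl
  -- basic tendstos
  have hAt : Tendsto (fun a => KMalpha a * t) l (nhds 0) := by
    have := (tendsto_KMalpha.mono_right nhdsWithin_le_nhds).mul_const t
    rw [zero_mul] at this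
    exact this
  have hcos : Tendsto (fun a => Real.cos (KMalpha a * t)) l (nhds 1) := by
    have := (Real.continuous_cos.tendsto 0).comp hAt
    simpa [Function.comp_def] using this
  have hsin : Tendsto (fun a => Real.sin (KMalpha a * t) / KMalpha a) l (nhds t) :=
    (tendsto_sin_mul_div t).comp tendsto_KMalpha
  have h1c : Tendsto (fun a => (1 - Real.cos (KMalpha a * t)) / (KMalpha a)^2) l
      (nhds (t^2/2)) := (tendsto_one_sub_cos t).comp tendsto_KMalpha
  have hch : Tendsto (fun a => (Real.cosh (KMbeta a * x) - 1) / (KMbeta a)^2) l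
      (nhds (x^2/2)) := (tendsto_cosh_sub_one x).comp tendsto_KMbeta
  have hid : Tendsto (fun a : ℝ => a) l (nhds (1/2)) :=
    tendsto_id.mono_left nhdsWithin_le_nhds
  have hsq : Tendsto (fun a : ℝ => Real.sqrt (2*a)) l (nhds 1) := by
    have hc : Tendsto (fun a : ℝ => Real.sqrt (2*a)) (nhds (1/2:ℝ))
        (nhds (Real.sqrt (2*(1/2)))) :=
      (Real.continuous_sqrt.comp (by continuity)).tendsto (1/2)
    have : Real.sqrt (2*(1/2:ℝ)) = 1 := by norm_num
    rw [this] at hc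
    exact hc.mono_left nhdsWithin_le_nhds
  have h4 : Tendsto (fun a : ℝ => (Real.sqrt (2*a) - 1) / (2*a - 1)) l (nhds (1/2)) := by
    have heq : ∀ᶠ a in l, 1 / (Real.sqrt (2*a) + 1) = (Real.sqrt (2*a) - 1) / (2*a - 1) := by
      filter_upwards [self_mem_nhdsWithin] with a ha
      have ha' : (1/2:ℝ) < a := ha
      have h2a : (0:ℝ) ≤ 2*a := by linarith
      have hs : Real.sqrt (2*a) ^ 2 = 2*a := Real.sq_sqrt h2a
      have hne : (2:ℝ)*a - 1 ≠ 0 := by linarith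
      have hne2 : Real.sqrt (2*a) + 1 ≠ 0 := by positivity
      rw [div_eq_div_iff hne2 hne]
      linear_combination -hs
    have hbase : Tendsto (fun a : ℝ => 1 / (Real.sqrt (2*a) + 1)) l (nhds (1/2)) := by
      have := hsq.add (tendsto_const_nhds (x := (1:ℝ)) (f := l))
      have h2 := (tendsto_const_nhds (x := (1:ℝ)) (f := l)).div this (by norm_num)
      norm_num at h2
      convert h2 using 2
      norm_num
    exact hbase.congr' heq
  -- limits of the renormalized pieces
  have hNR : Tendsto (auxNR t) l (nhds 4) := by
    have := hcos.const_mul (4:ℝ)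
    rw [mul_one] at this; exact this
  have hNI : Tendsto (auxNI t) l (nhds (8*t)) := by
    have := (hid.const_mul (16:ℝ)).mul hsin
    have h8 : (16:ℝ) * (1/2) * t = 8*t := by ring
    rw [h8] at this
    exact this.congr (fun a => by simp only [auxNI]; try ring)
  have hG : Tendsto (auxG t x) l (nhds (1 + 4*t^2 + 2*x^2)) := by
    have hterm1 := (hsq.const_mul (2:ℝ)).mul hch
    have hterm3 := (hid.const_mul (8:ℝ)).mul h1c
    have := (((hterm1.add h4).add hterm3).const_mul (2:ℝ))
    have hval : (2:ℝ) * ((2 * 1 * (x^2/2) + 1/2) + 8 * (1/2) * (t^2/2)) = 1 + 4*t^2 + 2*x^2 := by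
      ring
    rw [hval] at this
    exact this.congr (fun a => by simp only [auxG]; try ring)
  -- the limit denominator is nonzero
  have hdpos : (0:ℝ) < 1 + 4*t^2 + 2*x^2 := by positivity
  have hdne : ((1 + 4*t^2 + 2*x^2 : ℝ) : ℂ) ≠ 0 := by
    exact_mod_cast hdpos.ne'
  -- the model function and its limit
  have hF : Tendsto (fun a => Complex.exp (Complex.I * t) *
      (1 - ((auxNR t a : ℂ) + Complex.I * (auxNI t a : ℂ)) / ((auxG t x a : ℂ))))
      l (nhds (BP t x)) := by
    have hNRc : Tendsto (fun a => ((auxNR t a : ℝ) : ℂ)) l (nhds (4:ℂ)) := by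
      have := (Complex.continuous_ofReal.tendsto 4).comp hNR
      simpa [Function.comp_def] using this
    have hNIc : Tendsto (fun a => ((auxNI t a : ℝ) : ℂ)) l (nhds ((8*t : ℝ) : ℂ)) :=
      (Complex.continuous_ofReal.tendsto _).comp hNI
    have hGc : Tendsto (fun a => ((auxG t x a : ℝ) : ℂ)) l
        (nhds ((1 + 4*t^2 + 2*x^2 : ℝ) : ℂ)) :=
      (Complex.continuous_ofReal.tendsto _).comp hG
    have hnum := hNRc.add (hNIc.const_mul Complex.I)
    have hq := hnum.div hGc hdne
    have := (hq.const_sub (1:ℂ)).const_mul (Complex.exp (Complex.I * t))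
    convert this using 2
    · rfl
    rw [BP]
    congr 1
    push_cast
    ring
  have hEq : (fun a => Complex.exp (Complex.I * t) *
      (1 - ((auxNR t a : ℂ) + Complex.I * (auxNI t a : ℂ)) / ((auxG t x a : ℂ)))) =ᶠ[l]
      (fun a => BKM a t x) := by
    filter_upwards [self_mem_nhdsWithin] with a ha
    have ha' : (1/2:ℝ) < a := ha
    set u := Real.sqrt (2*a - 1) with hu
    set v := Real.sqrt (2*a) with hv
    have hu0 : 0 < u := Real.sqrt_pos.mpr (by linarith)
    have hv0 : 0 < v := Real.sqrt_pos.mpr (by linarith)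
    have hu2 : u^2 = 2*a - 1 := Real.sq_sqrt (by linarith)
    have hv2 : v^2 = 2*a := Real.sq_sqrt (by linarith)
    have hB : KMbeta a = Real.sqrt 2 * u := by
      rw [KMbeta, Real.sqrt_mul (by norm_num)]
    have hsB : Real.sqrt 2 * KMbeta a = 2*u := by
      rw [hB, ← mul_assoc, Real.mul_self_sqrt (by norm_num)]
    have hB2 : (KMbeta a)^2 = 2*u^2 := by
      rw [hB, mul_pow, Real.sq_sqrt (by norm_num)]
    have hA : KMalpha a = 2*(u*v) := by
      rw [KMalpha, show 8*a*(2*a-1) = (2*(u*v))^2 from by nlinarith [hu2, hv2],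
        Real.sqrt_sq (by positivity)]
    have hA2 : (KMalpha a)^2 = 4*(u^2*v^2) := by rw [hA]; ring
    have hAne : KMalpha a ≠ 0 := by rw [hA]; positivity
    -- real identities
    have r1 : Real.sqrt 2 * KMbeta a * ((KMbeta a)^2 * Real.cos (KMalpha a * t))
        = auxNR t a * u^3 := by
      rw [hB2, hsB, auxNR]; ring
    have r2 : Real.sqrt 2 * KMbeta a * (KMalpha a * Real.sin (KMalpha a * t))
        = auxNI t a * u^3 := by
      rw [hsB, auxNI, show (16:ℝ)*a = 8*v^2 from by linarith, hA]
      field_simp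
      ring
    have r3 : KMalpha a * Real.cosh (KMbeta a * x)
        - Real.sqrt 2 * KMbeta a * Real.cos (KMalpha a * t) = auxG t x a * u^3 := by
      rw [hsB, auxG, hB2, hA2, show (2*a - 1 : ℝ) = u^2 from hu2.symm,
        show (8:ℝ)*a = 4*v^2 from by linarith, ← hv, hA]
      field_simp
      ring
    have hu3c : ((u:ℝ):ℂ)^3 ≠ 0 := by
      exact pow_ne_zero _ (by exact_mod_cast hu0.ne')
    have e1 : (Real.sqrt 2 : ℂ) * (KMbeta a : ℂ) *
        (((KMbeta a : ℂ))^2 * (Real.cos (KMalpha a * t) : ℝ)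
          + Complex.I * (KMalpha a : ℂ) * (Real.sin (KMalpha a * t) : ℝ))
        = ((auxNR t a : ℂ) + Complex.I * (auxNI t a : ℂ)) * ((u:ℝ):ℂ)^3 := by
      calc (Real.sqrt 2 : ℂ) * (KMbeta a : ℂ) *
          (((KMbeta a : ℂ))^2 * (Real.cos (KMalpha a * t) : ℝ)
            + Complex.I * (KMalpha a : ℂ) * (Real.sin (KMalpha a * t) : ℝ))
          = ((Real.sqrt 2 * KMbeta a * ((KMbeta a)^2 * Real.cos (KMalpha a * t)) : ℝ) : ℂ)
            + Complex.I * ((Real.sqrt 2 * KMbeta a * (KMalpha a * Real.sin (KMalpha a * t)) : ℝ) : ℂ) := by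
            push_cast; ring
        _ = ((auxNR t a * u^3 : ℝ) : ℂ) + Complex.I * ((auxNI t a * u^3 : ℝ) : ℂ) := by
            rw [r1, r2]
        _ = ((auxNR t a : ℂ) + Complex.I * (auxNI t a : ℂ)) * ((u:ℝ):ℂ)^3 := by
            push_cast; ring
    have e2 : (KMalpha a : ℂ) * (Real.cosh (KMbeta a * x) : ℝ)
        - (Real.sqrt 2 : ℂ) * (KMbeta a : ℂ) * (Real.cos (KMalpha a * t) : ℝ)
        = ((auxG t x a : ℂ)) * ((u:ℝ):ℂ)^3 := by
      calc (KMalpha a : ℂ) * (Real.cosh (KMbeta a * x) : ℝ)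
          - (Real.sqrt 2 : ℂ) * (KMbeta a : ℂ) * (Real.cos (KMalpha a * t) : ℝ)
          = ((KMalpha a * Real.cosh (KMbeta a * x)
              - Real.sqrt 2 * KMbeta a * Real.cos (KMalpha a * t) : ℝ) : ℂ) := by
            push_cast; ring
        _ = ((auxG t x a * u^3 : ℝ) : ℂ) := by rw [r3]
        _ = ((auxG t x a : ℂ)) * ((u:ℝ):ℂ)^3 := by push_cast; ring
    rw [BKM]
    congr 1
    rw [sub_right_inj]
    rw [e1, e2, mul_div_mul_right _ _ hu3c]
  exact hF.congr' hEq
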